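/- Let f : ℝ → ℝ₊ ∪ {∞} satisfy: nonnegative, proper, closed, convex, essentially smooth, and strongly convex on every compact convex subset of int(dom f) \ W for some finite W ⊂ int(dom f). Then the perspective cone K = epi f^π ⊂ ℝ³ is pointed (K ∩ −K = {0}) and solid (int K ≠ ∅). -/

import Mathlib

open Set Filter Topology

noncomputable section

/-- `h` is proper: finite somewhere and never `⊥`. -/
def EProper (h : ℝ → EReal) : Prop := (∃ x, h x ≠ ⊤) ∧ ∀ x, h x ≠ ⊥

/-- effective domain of an extended-real-valued function. -/
def EDom (h : ℝ → EReal) : Set ℝ := {x | h x ≠ ⊤}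

/-- convexity of an extended-real-valued function on `ℝ`. -/
def EConvexFn (h : ℝ → EReal) : Prop :=
  ∀ x y a b : ℝ, 0 ≤ a → 0 ≤ b → a + b = 1 →
    h (a * x + b * y) ≤ (a : EReal) * h x + (b : EReal) * h y

/-- recession function of `h` with base point `y`:
`h_∞(d) = sup_{t>0} (h(y + t d) − h(y))/t`. -/
noncomputable def erec (h : ℝ → EReal) (y : ℝ) (d : ℝ) : EReal :=
  ⨆ t : {t : ℝ // 0 < t}, ((((t : ℝ)⁻¹ : ℝ) : EReal)) * (h (y + (t : ℝ) * d) - h y)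

/-- Fenchel conjugate. -/
noncomputable def econj (h : ℝ → EReal) (y : ℝ) : EReal :=
  ⨆ x : ℝ, ((x * y : ℝ) : EReal) - h x

/-- subdifferential of `h` at `x`. -/
def ESubdiff (h : ℝ → EReal) (x : ℝ) : Set ℝ :=
  {ξ | ∀ z : ℝ, h x + ((ξ * (z - x) : ℝ) : EReal) ≤ h z}

/-- essential smoothness witnessed by the derivative function `h'`. -/
def EssSmoothWith (h : ℝ → EReal) (h' : ℝ → ℝ) : Prop :=
  (interior (EDom h)).Nonempty ∧
  (∀ x ∈ interior (EDom h), HasDerivAt (fun z => (h z).toReal) (h' x) x) ∧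
  ∀ (u : ℕ → ℝ) (x0 : ℝ), (∀ n, u n ∈ interior (EDom h)) →
    Tendsto u atTop (𝓝 x0) → x0 ∈ frontier (EDom h) →
    Tendsto (fun n => |h' (u n)|) atTop atTop

def EssSmooth (h : ℝ → EReal) : Prop := ∃ h', EssSmoothWith h h'

/-- essential strict convexity: strict convexity on every convex subset of `dom ∂h`. -/
def EssStrictConvex (h : ℝ → EReal) : Prop :=
  ∀ s : Set ℝ, s ⊆ {x | (ESubdiff h x).Nonempty} → Convex ℝ s →
    ∀ x ∈ s, ∀ y ∈ s, x ≠ y → ∀ a b : ℝ, 0 < a → 0 < b → a + b = 1 →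
      h (a * x + b * y) < (a : EReal) * h x + (b : EReal) * h y

/-- Legendre function: proper, closed, convex, essentially smooth and
essentially strictly convex. -/
def ELegendre (h : ℝ → EReal) : Prop :=
  EProper h ∧ LowerSemicontinuous h ∧ EConvexFn h ∧ EssSmooth h ∧ EssStrictConvex h

/-- strong convexity of `h` on a set `s` (with some modulus `m > 0`). -/
def StrongConvexOnE (h : ℝ → EReal) (s : Set ℝ) : Prop :=
  ∃ m : ℝ, 0 < m ∧ ∀ x ∈ s, ∀ y ∈ s, ∀ a b : ℝ, 0 ≤ a → 0 ≤ b → a + b = 1 →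
    h (a * x + b * y) + ((m / 2 * (a * b) * (x - y) ^ 2 : ℝ) : EReal)
      ≤ (a : EReal) * h x + (b : EReal) * h y

/-- closed perspective function of `f`, where `finf` plays the role of the
recession function of `f`. -/
noncomputable def persp (f finf : ℝ → EReal) (x t : ℝ) : EReal :=
  if 0 < t then (t : EReal) * f (x / t) else if t = 0 then finf x else ⊤

/-- epigraph of the perspective function, as a subset of `ℝ³`. -/
def perspEpi (f finf : ℝ → EReal) : Set (ℝ × ℝ × ℝ) :=
  {p | persp f finf p.1 p.2.1 ≤ (p.2.2 : EReal)}

/-- Under the blanket assumption (nonnegative, proper, closed, convex,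
essentially smooth, strongly convex on compact convex subsets of `int(dom f) \ W` for a
finite `W ⊂ int(dom f)`), the perspective cone `K = epi f^π ⊂ ℝ³` is pointed and solid. -/
lemma erec_bound {f : ℝ → EReal} {y d r : ℝ} (hne : ∀ x, f x ≠ ⊥) (hy : f y ≠ ⊤)
    (h : erec f y d ≤ (r : EReal)) :
    ∀ t : ℝ, 0 < t → f (y + t * d) ≤ (((f y).toReal + t * r : ℝ) : EReal) := by
  intro t ht
  have key : ((((t : ℝ)⁻¹ : ℝ) : EReal)) * (f (y + t * d) - f y) ≤ (r : EReal) := by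
    refine le_trans ?_ h
    exact le_iSup (fun s : {t : ℝ // 0 < t} =>
      ((((s : ℝ)⁻¹ : ℝ) : EReal)) * (f (y + (s : ℝ) * d) - f y)) ⟨t, ht⟩
  have hY : f y = (((f y).toReal : ℝ) : EReal) := (EReal.coe_toReal hy (hne y)).symm
  set Y := (f y).toReal with hYdef
  by_cases htop : f (y + t * d) = ⊤
  · rw [htop, hY, EReal.top_sub_coe, EReal.mul_top_of_pos] at key
    · exact absurd key (EReal.coe_lt_top r : (r : EReal) < ⊤).not_ge
    · exact EReal.coe_pos.2 (inv_pos.2 ht)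
  · have hZ : f (y + t * d) = (((f (y + t * d)).toReal : ℝ) : EReal) :=
      (EReal.coe_toReal htop (hne _)).symm
    set Z := (f (y + t * d)).toReal with hZdef
    rw [hZ, hY, ← EReal.coe_sub, ← EReal.coe_mul, EReal.coe_le_coe_iff] at key
    rw [hZ, EReal.coe_le_coe_iff]
    have h2 := mul_le_mul_of_nonneg_left key ht.le
    rw [← mul_assoc, mul_inv_cancel₀ ht.ne', one_mul] at h2
    linarith

lemma erec_zero {f : ℝ → EReal} {y : ℝ} (hne : f y ≠ ⊥) (hy : f y ≠ ⊤) :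
    erec f y 0 = 0 := by
  have hY : f y = (((f y).toReal : ℝ) : EReal) := (EReal.coe_toReal hy hne).symm
  have hz : ∀ t : {t : ℝ // 0 < t},
      ((((t : ℝ)⁻¹ : ℝ) : EReal)) * (f (y + (t : ℝ) * 0) - f y) = 0 := by
    intro t
    rw [mul_zero, add_zero, hY, ← EReal.coe_sub, sub_self, EReal.coe_zero, mul_zero]
  unfold erec
  haveI : Nonempty {t : ℝ // 0 < t} := ⟨⟨1, one_pos⟩⟩
  calc (⨆ t : {t : ℝ // 0 < t}, ((((t : ℝ)⁻¹ : ℝ) : EReal)) * (f (y + (t : ℝ) * 0) - f y))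
      = ⨆ _ : {t : ℝ // 0 < t}, (0 : EReal) := by
        congr 1; funext t; exact hz t
    _ = 0 := iSup_const

lemma persp_zero (f finf : ℝ → EReal) (x : ℝ) : persp f finf x 0 = finf x := by
  unfold persp
  rw [if_neg (lt_irrefl 0), if_pos rfl]

lemma persp_of_neg {t : ℝ} (f finf : ℝ → EReal) (x : ℝ) (ht : t < 0) :
    persp f finf x t = ⊤ := by
  unfold persp
  rw [if_neg (by linarith), if_neg ht.ne]

lemma persp_of_pos {t : ℝ} (f finf : ℝ → EReal) (x : ℝ) (ht : 0 < t) :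
    persp f finf x t = (t : EReal) * f (x / t) := by
  unfold persp
  rw [if_pos ht]

theorem perspEpi_pointed_solid (f : ℝ → EReal) (hProp : EProper f)
    (hClosed : LowerSemicontinuous f) (hConv : EConvexFn f)
    (hNonneg : ∀ x, 0 ≤ f x) (hSmooth : EssSmooth f)
    (W : Set ℝ) (hWfin : W.Finite) (hWsub : W ⊆ interior (EDom f))
    (hStrong : ∀ s : Set ℝ, s ⊆ interior (EDom f) \ W → IsCompact s → Convex ℝ s →
      StrongConvexOnE f s)
    (y : ℝ) (hy : y ∈ EDom f) :
    perspEpi f (erec f y) ∩ -(perspEpi f (erec f y)) = {0}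
    ∧ (interior (perspEpi f (erec f y))).Nonempty := by
  obtain ⟨hPropEx, hPropBot⟩ := hProp
  have hyT : f y ≠ ⊤ := hy
  have hyB : f y ≠ ⊥ := hPropBot y
  set Y := (f y).toReal with hYdef
  have hY : f y = (Y : EReal) := (EReal.coe_toReal hyT hyB).symm
  constructor
  · -- pointedness
    ext p
    obtain ⟨x, t, r⟩ := p
    simp only [Set.mem_inter_iff, Set.mem_neg, Set.mem_singleton_iff]
    constructor
    · rintro ⟨hp1, hp2⟩
      have hp1' : persp f (erec f y) x t ≤ (r : EReal) := hp1
      have hp2' : persp f (erec f y) (-x) (-t) ≤ ((-r : ℝ) : EReal) := hp2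
      rcases lt_trichotomy t 0 with htneg | ht0 | htpos
      · exfalso
        rw [persp_of_neg _ _ _ htneg] at hp1'
        exact (EReal.coe_lt_top r : (r : EReal) < ⊤).not_ge hp1'
      · subst ht0
        rw [neg_zero] at hp2'
        rw [persp_zero] at hp1' hp2'
        have hx0 : x = 0 := by
          by_contra hx
          have L1 : ∀ s : ℝ, f (y + s * x) ≤ ((Y + s * r : ℝ) : EReal) := by
            intro s
            rcases lt_trichotomy s 0 with hs | hs | hs
            · have hb := erec_bound hPropBot hyT hp2' (-s) (by linarith)
              have h1 : y + (-s) * (-x) = y + s * x := by ring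
              have h2 : (Y + (-s) * (-r) : ℝ) = Y + s * r := by ring
              rw [h1, h2] at hb
              exact hb
            · subst hs
              rw [zero_mul, add_zero, zero_mul, add_zero, hY]
            · exact erec_bound hPropBot hyT hp1' s hs
          have hfin : ∀ z : ℝ, f z ≠ ⊤ := by
            intro z
            have harg : y + (z - y) / x * x = z := by field_simp; ring
            have := L1 ((z - y) / x)
            rw [harg] at this
            exact ne_top_of_le_ne_top (EReal.coe_ne_top _) this
          have L2 : ∀ z : ℝ, f z = ((Y + ((z - y) / x) * r : ℝ) : EReal) := by
            intro z
            set s := (z - y) / x with hs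
            have harg : y + s * x = z := by rw [hs]; field_simp; ring
            have hup : f z ≤ ((Y + s * r : ℝ) : EReal) := by
              have := L1 s; rwa [harg] at this
            have hup2 : f (y + (-s) * x) ≤ ((Y + (-s) * r : ℝ) : EReal) := L1 (-s)
            have hz1T : f z ≠ ⊤ := hfin z
            have hz2T : f (y + (-s) * x) ≠ ⊤ := hfin _
            have hZ1 : f z = (((f z).toReal : ℝ) : EReal) :=
              (EReal.coe_toReal hz1T (hPropBot z)).symm
            have hZ2 : f (y + (-s) * x) = (((f (y + (-s) * x)).toReal : ℝ) : EReal) :=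
              (EReal.coe_toReal hz2T (hPropBot _)).symm
            set Z1 := (f z).toReal
            set Z2 := (f (y + (-s) * x)).toReal
            have hconv := hConv z (y + (-s) * x) (1/2) (1/2) (by norm_num) (by norm_num)
              (by norm_num)
            have hmid : (1/2 : ℝ) * z + (1/2 : ℝ) * (y + (-s) * x) = y := by
              rw [← harg]; ring
            rw [hmid, hY, hZ1, hZ2, ← EReal.coe_mul, ← EReal.coe_mul, ← EReal.coe_add,
              EReal.coe_le_coe_iff] at hconv
            have hu1 : Z1 ≤ Y + s * r := by
              rw [hZ1, EReal.coe_le_coe_iff] at hup; exact hup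
            have hu2 : Z2 ≤ Y + (-s) * r := by
              rw [hZ2, EReal.coe_le_coe_iff] at hup2; exact hup2
            have : Z1 = Y + s * r := by linarith
            rw [hZ1, this]
          have hdom : interior (EDom f) = univ := by
            have : EDom f = univ := Set.eq_univ_of_forall hfin
            rw [this, interior_univ]
          obtain ⟨c0, hc0⟩ := hWfin.bddAbove
          set c := c0 + 1 with hc
          have hsub : Icc c (c + 1) ⊆ interior (EDom f) \ W := by
            intro z hz
            refine ⟨by rw [hdom]; trivial, fun hw => ?_⟩
            have h1 := hc0 hw
            have h2 := hz.1
            simp only [hc] at h2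
            linarith
          obtain ⟨m, hm, hSC⟩ := hStrong _ hsub isCompact_Icc (convex_Icc _ _)
          have h1 := hSC c ⟨le_refl _, by linarith⟩ (c + 1) ⟨by linarith, le_refl _⟩
            (1/2) (1/2) (by norm_num) (by norm_num) (by norm_num)
          rw [L2 ((1/2) * c + (1/2) * (c+1)), L2 c, L2 (c+1), ← EReal.coe_mul,
            ← EReal.coe_mul, ← EReal.coe_add, ← EReal.coe_add, EReal.coe_le_coe_iff] at h1
          have key : ((1:ℝ)/2 * c + 1/2 * (c+1) - y) / x * r
              = 1/2 * ((c - y) / x * r) + 1/2 * ((c + 1 - y) / x * r) := by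
            field_simp; ring
          have hsq : (c - (c + 1) : ℝ) ^ 2 = 1 := by ring
          rw [hsq] at h1
          nlinarith [h1, key, hm]
        subst hx0
        simp only [neg_zero] at hp2'
        have he0 : erec f y 0 = 0 := erec_zero hyB hyT
        rw [he0] at hp1' hp2'
        have hr1 : (0:ℝ) ≤ r := by exact_mod_cast hp1'
        have hr2 : (0:ℝ) ≤ -r := by exact_mod_cast hp2'
        have hr : r = 0 := by linarith
        subst hr
        rfl
      · exfalso
        rw [persp_of_neg _ _ _ (by linarith : -t < 0)] at hp2'
        exact (EReal.coe_lt_top _ : ((-r : ℝ) : EReal) < ⊤).not_ge hp2'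
    · rintro h
      have h1 : x = 0 := congrArg Prod.fst h
      have h2 : t = 0 := congrArg (fun q => q.2.1) h
      have h3 : r = 0 := congrArg (fun q => q.2.2) h
      subst h1; subst h2; subst h3
      have he0 : erec f y 0 = 0 := erec_zero hyB hyT
      have hmem : persp f (erec f y) 0 0 ≤ ((0:ℝ) : EReal) := by
        rw [persp_zero, he0]
        exact le_refl _
      exact ⟨hmem, by simpa [Set.mem_neg, perspEpi] using hmem⟩
  · -- solidity
    obtain ⟨f', ⟨x0, hx0⟩, -, -⟩ := hSmooth
    obtain ⟨ε, hε, hball⟩ := Metric.isOpen_iff.mp isOpen_interior x0 hx0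
    set a := x0 - ε/2 with ha
    set b := x0 + ε/2 with hb
    have haD : a ∈ EDom f := by
      refine interior_subset (hball ?_)
      rw [Metric.mem_ball, Real.dist_eq, ha, abs_lt]
      constructor <;> linarith
    have hbD : b ∈ EDom f := by
      refine interior_subset (hball ?_)
      rw [Metric.mem_ball, Real.dist_eq, hb, abs_lt]
      constructor <;> linarith
    set A := (f a).toReal with hAdef
    set B := (f b).toReal with hBdef
    have hA : f a = (A : EReal) := (EReal.coe_toReal haD (hPropBot a)).symm
    have hB : f b = (B : EReal) := (EReal.coe_toReal hbD (hPropBot b)).symm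
    have hA0 : 0 ≤ A := by
      have h := hNonneg a
      rw [hA] at h
      exact_mod_cast h
    set M := max A B with hM
    have hM0 : 0 ≤ M := le_trans hA0 (le_max_left _ _)
    have hbound : ∀ z ∈ Icc a b, f z ≤ (M : EReal) := by
      intro z hz
      set lam := (b - z) / ε with hlam
      have hba : b - a = ε := by rw [ha, hb]; ring
      have hlam0 : 0 ≤ lam := div_nonneg (by linarith [hz.2]) hε.le
      have hlam1 : lam ≤ 1 := by
        rw [hlam, div_le_one hε]
        linarith [hz.1, hba]
      have hconv := hConv a b lam (1 - lam) hlam0 (by linarith) (by ring)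
      have harg : lam * a + (1 - lam) * b = z := by
        rw [hlam, ha, hb]; field_simp; ring
      rw [harg, hA, hB, ← EReal.coe_mul, ← EReal.coe_mul, ← EReal.coe_add] at hconv
      refine le_trans hconv (EReal.coe_le_coe_iff.2 ?_)
      nlinarith [le_max_left A B, le_max_right A B]
    set δ := min (1/2 : ℝ) (ε / (4 * (1 + |x0|))) with hδdef
    have hδ0 : 0 < δ := lt_min (by norm_num) (div_pos hε (by positivity))
    have hδhalf : δ ≤ 1/2 := min_le_left _ _
    have hδε : δ * (1 + |x0|) ≤ ε / 4 := by
      have h := min_le_right (1/2 : ℝ) (ε / (4 * (1 + |x0|)))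
      calc δ * (1 + |x0|) ≤ ε / (4 * (1 + |x0|)) * (1 + |x0|) :=
            mul_le_mul_of_nonneg_right h (by positivity)
        _ = ε / 4 := by field_simp
    set U : Set (ℝ × ℝ × ℝ) :=
      Ioo (x0 - δ) (x0 + δ) ×ˢ (Ioo (1 - δ) (1 + δ) ×ˢ Ioi (2 * M + 1)) with hU
    have hUopen : IsOpen U := (isOpen_Ioo.prod (isOpen_Ioo.prod isOpen_Ioi))
    have hUsub : U ⊆ perspEpi f (erec f y) := by
      rintro ⟨x, t, r⟩ ⟨hx, ht, hr⟩
      simp only [mem_Ioo, mem_Ioi] at hx ht hr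
      have ht2 : (1:ℝ)/2 ≤ t := by linarith [ht.1]
      have ht0 : (0:ℝ) < t := by linarith
      have htd : |t - 1| ≤ δ := by
        rw [abs_le]; constructor <;> linarith [ht.1, ht.2]
      have hx0b1 : x0 * (t - 1) ≤ |x0| * δ :=
        calc x0 * (t - 1) ≤ |x0 * (t - 1)| := le_abs_self _
          _ = |x0| * |t - 1| := abs_mul _ _
          _ ≤ |x0| * δ := mul_le_mul_of_nonneg_left htd (abs_nonneg _)
      have hx0b2 : -(|x0| * δ) ≤ x0 * (t - 1) := by
        have h1 : |x0 * (t - 1)| ≤ |x0| * δ := by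
          rw [abs_mul]; exact mul_le_mul_of_nonneg_left htd (abs_nonneg _)
        have h2 := neg_abs_le (x0 * (t - 1))
        linarith
      have hεt : ε / 4 ≤ ε / 2 * t := by
        have h1 : ε / 2 * (1/2) ≤ ε / 2 * t :=
          mul_le_mul_of_nonneg_left ht2 (by positivity)
        linarith
      have hδε' : δ + |x0| * δ ≤ ε / 4 := by
        have h2 : δ * (1 + |x0|) = δ + |x0| * δ := by ring
        linarith
      have hmem : x / t ∈ Icc a b := by
        constructor
        · rw [ha, le_div_iff₀ ht0]
          have e1 : (x0 - ε / 2) * t = x0 + x0 * (t - 1) - ε / 2 * t := by ring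
          linarith [hx.1, hx0b1]
        · rw [hb, div_le_iff₀ ht0]
          have e2 : (x0 + ε / 2) * t = x0 + x0 * (t - 1) + ε / 2 * t := by ring
          linarith [hx.2, hx0b2]
      have hfz := hbound _ hmem
      have hzT : f (x / t) ≠ ⊤ := ne_top_of_le_ne_top (EReal.coe_ne_top M) hfz
      have hC : f (x / t) = (((f (x / t)).toReal : ℝ) : EReal) :=
        (EReal.coe_toReal hzT (hPropBot _)).symm
      set C := (f (x / t)).toReal with hCdef
      have hC0 : 0 ≤ C := by
        have h := hNonneg (x / t)
        rw [hC] at h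
        exact_mod_cast h
      have hCM : C ≤ M := by
        rw [hC, EReal.coe_le_coe_iff] at hfz; exact hfz
      show persp f (erec f y) x t ≤ (r : EReal)
      rw [persp_of_pos _ _ _ ht0, hC, ← EReal.coe_mul]
      apply EReal.coe_le_coe_iff.2
      have ht3 : t ≤ 2 := by linarith [ht.2]
      have h1 : t * C ≤ 2 * C := mul_le_mul_of_nonneg_right ht3 hC0
      have h2 : 2 * C ≤ 2 * M := by linarith
      linarith
    have hKint := interior_maximal hUsub hUopen
    refine ⟨(x0, 1, 2 * M + 2), hKint ?_⟩
    refine ⟨⟨by linarith, by linarith⟩, ⟨by simp only [mem_Ioo]; constructor <;> linarith, ?_⟩⟩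
    simp only [mem_Ioi]; linarith
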